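/- arXiv:math/0102122 — 4 statements merged into one kernel-verified Lean document; each statement's English description precedes it below -/
import Mathlib

section
/- (Lemma on R_{c,ε}, case a.) Let d ≥ 1, let c ∈ ℕA_d with deg c = s ≥ 3, and let ε ∈ {1,…,⌊(s+1)/2⌋}. If the geometric realization |Δ_{(c,ε−1)}| is nonempty and path-connected, then |R_{c,ε}| is nonempty and path-connected. -/
open CategoryTheory

noncomputable section

/-- The set `A_d ⊆ ℤ^{1+d}` of vectors whose first coordinate is `1` and whose
remaining coordinates are `0` or `1`. -/
def Avec (d : ℕ) : Set (Fin (d + 1) → ℤ) :=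
  {v | v 0 = 1 ∧ ∀ i, i ≠ 0 → v i = 0 ∨ v i = 1}

/-- `ℕA_d`, the additive submonoid of `ℤ^{1+d}` generated by `A_d`. -/
def NA (d : ℕ) : AddSubmonoid (Fin (d + 1) → ℤ) :=
  AddSubmonoid.closure (Avec d)

/-- `ℝ^{A_d}`. -/
abbrev RA (d : ℕ) : Type := ↥(Avec d) → ℝ

/-- The standard basis vector of `ℝ^{A_d}` indexed by `a ∈ A_d`. -/
def eVec {d : ℕ} (a : ↥(Avec d)) : RA d :=
  fun x => if x = a then 1 else 0

/-- The geometric realization `|Δ_b| ⊆ ℝ^{A_d}`: the union over all tuples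
`(a_1, …, a_k)` of elements of `A_d` with `a_1 + ⋯ + a_k = b` of the convex hulls
`conv {e_{a_1}, …, e_{a_k}}`.  (Any such tuple automatically has length `k = deg b`.) -/
def Delta (d : ℕ) (b : Fin (d + 1) → ℤ) : Set (RA d) :=
  ⋃ (k : ℕ) (f : Fin k → ↥(Avec d)) (_ : ∑ i, (f i : Fin (d + 1) → ℤ) = b),
    convexHull ℝ (Set.range fun i => eVec (f i))

lemma snoc_mem_Avec {d : ℕ} {a : Fin (d + 1) → ℤ} (ha : a ∈ Avec d) {χ : ℤ}
    (hχ : χ = 0 ∨ χ = 1) : Fin.snoc a χ ∈ Avec (d + 1) := by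
  constructor
  · have h0 : (0 : Fin (d + 2)) = Fin.castSucc 0 := rfl
    rw [h0, Fin.snoc_castSucc]
    exact ha.1
  · intro i hi
    induction i using Fin.lastCases with
    | last => rw [Fin.snoc_last]; exact hχ
    | cast j =>
      rw [Fin.snoc_castSucc]
      rcases eq_or_ne j 0 with hj | hj
      · exact absurd (by simp [hj]) hi
      · exact ha.2 j hj

/-- Appending a last coordinate `0` to an element of `A_d`. -/
def app0 {d : ℕ} (a : ↥(Avec d)) : ↥(Avec (d + 1)) :=
  ⟨Fin.snoc ↑a 0, snoc_mem_Avec a.2 (Or.inl rfl)⟩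

/-- Appending a last coordinate `1` to an element of `A_d`. -/
def app1 {d : ℕ} (a : ↥(Avec d)) : ↥(Avec (d + 1)) :=
  ⟨Fin.snoc ↑a 1, snoc_mem_Avec a.2 (Or.inr rfl)⟩

/-- The realization `|R_{c,ε}| ⊆ ℝ^{A_{d+1}}`: the union over tuples
`(α_1, …, α_s)` of elements of `A_d` with `α_1 + ⋯ + α_s = c` and over sequences of
pairwise distinct indices `i_1, …, i_{s-1}` of the convex hulls of
`e_{(α_{i_1},1)}, …, e_{(α_{i_{ε-1}},1)}, e_{(α_{i_ε},0)}, …, e_{(α_{i_{s-1}},0)}`. -/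
def Rset (d : ℕ) (c : Fin (d + 1) → ℤ) (ε : ℕ) : Set (RA (d + 1)) :=
  ⋃ (s : ℕ) (α : Fin s → ↥(Avec d)) (_ : ∑ i, (α i : Fin (d + 1) → ℤ) = c)
    (g : Fin (s - 1) → Fin s) (_ : Function.Injective g),
    convexHull ℝ (Set.range fun j : Fin (s - 1) =>
      eVec (if (j : ℕ) < ε - 1 then app1 (α (g j)) else app0 (α (g j))))

/-- The realization `|F^l(Δ_b)| ⊆ ℝ^{A_{d+1}}`: the union over tuples
`(a_1, …, a_k)` of elements of `A_d` with `a_1 + ⋯ + a_k = b` and over indices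
`i_0, …, i_l ∈ {1, …, k}` of the convex hulls of `e_{(a_{i_0},0)}, …, e_{(a_{i_l},0)}`. -/
def Fset (d : ℕ) (b : Fin (d + 1) → ℤ) (l : ℕ) : Set (RA (d + 1)) :=
  ⋃ (k : ℕ) (a : Fin k → ↥(Avec d)) (_ : ∑ i, (a i : Fin (d + 1) → ℤ) = b)
    (idx : Fin (l + 1) → Fin k),
    convexHull ℝ (Set.range fun j => eVec (app0 (a (idx j))))

/-- The set `|S'_ε| ⊆ ℝ^{A_{d+1}}` associated to `S = ⟨a_1, …, a_k⟩`: the union over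
all `(χ_1, …, χ_k) ∈ {0,1}^k` with exactly `ε` entries equal to `1` of the convex hulls
`conv {e_{(a_1,χ_1)}, …, e_{(a_k,χ_k)}}`. -/
def Sprime {d k : ℕ} (a : Fin k → ↥(Avec d)) (ε : ℕ) : Set (RA (d + 1)) :=
  ⋃ (χ : Fin k → Bool) (_ : (Finset.univ.filter fun i => χ i = true).card = ε),
    convexHull ℝ (Set.range fun i => eVec (if χ i then app1 (a i) else app0 (a i)))

/-- The singular chain complex of a topological space with `ℂ` coefficients. -/
def singularChains : TopCat.{0} ⥤ ChainComplex (ModuleCat.{0} ℂ) ℕ :=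
  TopCat.toSSet ⋙ ((SimplicialObject.whiskering _ _).obj (ModuleCat.free ℂ)) ⋙
    AlgebraicTopology.alternatingFaceMapComplex (ModuleCat.{0} ℂ)

/-- Singular homology with `ℂ` coefficients, as a functor. -/
def SH (n : ℕ) : TopCat.{0} ⥤ ModuleCat.{0} ℂ :=
  singularChains ⋙ HomologicalComplex.homologyFunctor (ModuleCat.{0} ℂ) (ComplexShape.down ℕ) n

end
section AuxRset

open Finset

lemma avec_finite (d : ℕ) : Finite ↥(Avec d) := by
  apply Finite.of_injective (fun (a : ↥(Avec d)) => fun (i : Fin (d+1)) => decide (a.val i = 1))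
  intro a b h
  ext i
  rcases eq_or_ne i 0 with hi | hi
  · rw [hi, a.2.1, b.2.1]
  · have ha := a.2.2 i hi
    have hb := b.2.2 i hi
    have hh := congrFun h i
    simp only [decide_eq_decide] at hh
    rcases ha with h1 | h1 <;> rcases hb with h2 | h2 <;> simp_all

lemma sum_avec_apply {d k : ℕ} (f : Fin k → ↥(Avec d)) (j : Fin (d+1)) :
    (∑ i, (f i : Fin (d + 1) → ℤ)) j = ∑ i, (f i : Fin (d+1) → ℤ) j := by
  rw [Finset.sum_apply]

lemma sum_avec_zero {d k : ℕ} (f : Fin k → ↥(Avec d)) :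
    (∑ i, (f i : Fin (d + 1) → ℤ)) 0 = (k : ℤ) := by
  rw [sum_avec_apply]
  calc ∑ i, (f i : Fin (d+1) → ℤ) 0 = ∑ _i : Fin k, (1 : ℤ) :=
        Finset.sum_congr rfl (fun i _ => (f i).2.1)
    _ = (k : ℤ) := by simp

lemma init_mem_Avec {d : ℕ} (a : ↥(Avec (d+1))) : Fin.init a.val ∈ Avec d := by
  constructor
  · have h0 : Fin.castSucc (0 : Fin (d+1)) = 0 := rfl
    show a.val (Fin.castSucc 0) = 1
    rw [h0]; exact a.2.1
  · intro i hi
    show a.val (Fin.castSucc i) = 0 ∨ a.val (Fin.castSucc i) = 1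
    apply a.2.2
    simpa using hi

/-- strip the last coordinate -/
def strip {d : ℕ} (a : ↥(Avec (d+1))) : ↥(Avec d) := ⟨Fin.init a.val, init_mem_Avec a⟩

/-- the last coordinate as a Bool -/
def chi {d : ℕ} (a : ↥(Avec (d+1))) : Bool := decide (a.val (Fin.last (d+1)) = 1)

lemma last_mem {d : ℕ} (a : ↥(Avec (d+1))) :
    a.val (Fin.last (d+1)) = 0 ∨ a.val (Fin.last (d+1)) = 1 := by
  apply a.2.2
  simp [Fin.ext_iff]

lemma eq_app_strip {d : ℕ} (a : ↥(Avec (d+1))) :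
    a = if chi a then app1 (strip a) else app0 (strip a) := by
  rcases last_mem a with h | h
  · have hc : chi a = false := by simp [chi, h]
    rw [hc]
    apply Subtype.ext
    show a.val = Fin.snoc (Fin.init a.val) 0
    rw [← h, Fin.snoc_init_self]
  · have hc : chi a = true := by simp [chi, h]
    rw [hc]
    apply Subtype.ext
    show a.val = Fin.snoc (Fin.init a.val) 1
    rw [← h, Fin.snoc_init_self]

lemma chi_app0 {d : ℕ} (a : ↥(Avec d)) : chi (app0 a) = false := by
  simp [chi, app0, Fin.snoc_last]

lemma chi_app1 {d : ℕ} (a : ↥(Avec d)) : chi (app1 a) = true := by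
  simp [chi, app1, Fin.snoc_last]

lemma app_val_castSucc {d : ℕ} (a : ↥(Avec d)) (j : Fin (d+1)) :
    (app0 a : Fin (d+2) → ℤ) (Fin.castSucc j) = (a : Fin (d+1) → ℤ) j ∧
    (app1 a : Fin (d+2) → ℤ) (Fin.castSucc j) = (a : Fin (d+1) → ℤ) j := by
  constructor <;> simp [app0, app1, Fin.snoc_castSucc]

end AuxRset
section AuxHull

open Finset Set

lemma hull_sum_coords {d k : ℕ} (f : Fin k → ↥(Avec d)) (W : Finset ↥(Avec d))
    (t : ℝ) (hW : ∀ i, (if f i ∈ W then (1:ℝ) else 0) = t)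
    {x : RA d} (hx : x ∈ convexHull ℝ (Set.range fun i => eVec (f i))) :
    ∑ a ∈ W, x a = t := by
  classical
  let L : RA d →ₗ[ℝ] ℝ := ∑ a ∈ W, LinearMap.proj a
  have hL : ∀ y : RA d, L y = ∑ a ∈ W, y a := by
    intro y; simp [L, LinearMap.sum_apply]
  have hLe : ∀ b : ↥(Avec d), L (eVec b) = if b ∈ W then (1:ℝ) else 0 := by
    intro b
    rw [hL]
    have : ∀ a, eVec b a = if a = b then (1:ℝ) else 0 := by
      intro a; simp [eVec]
    calc ∑ a ∈ W, eVec b a = ∑ a ∈ W, if a = b then (1:ℝ) else 0 :=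
          Finset.sum_congr rfl (fun a _ => this a)
      _ = if b ∈ W then (1:ℝ) else 0 := Finset.sum_ite_eq' W b (fun _ => (1:ℝ))
  have himg : L x ∈ convexHull ℝ (L '' (Set.range fun i => eVec (f i))) := by
    rw [← L.image_convexHull]
    exact Set.mem_image_of_mem _ hx
  have hsub : L '' (Set.range fun i => eVec (f i)) ⊆ {t} := by
    rintro _ ⟨_, ⟨i, rfl⟩, rfl⟩
    rw [hLe, hW i]; rfl
  have := convexHull_mono hsub himg
  rw [convexHull_singleton] at this
  rw [← hL]
  exact this

lemma vertex_mem_hull {d k : ℕ} (f : Fin k → ↥(Avec d)) (i : Fin k) :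
    eVec (f i) ∈ convexHull ℝ (Set.range fun i => eVec (f i)) :=
  subset_convexHull ℝ _ ⟨i, rfl⟩

lemma exists_shared_vertex {d m n : ℕ} (v : Fin m → ↥(Avec d)) (w : Fin n → ↥(Avec d))
    {x : RA d} (hv : x ∈ convexHull ℝ (Set.range fun i => eVec (v i)))
    (hw : x ∈ convexHull ℝ (Set.range fun j => eVec (w j))) :
    ∃ i j, v i = w j := by
  classical
  by_contra h
  push_neg at h
  set W := Finset.image w Finset.univ with hWdef
  have h1 : ∑ a ∈ W, x a = 1 := by
    apply hull_sum_coords w W 1 _ hw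
    intro j
    rw [if_pos (Finset.mem_image_of_mem w (Finset.mem_univ j))]
  have h0 : ∑ a ∈ W, x a = 0 := by
    apply hull_sum_coords v W 0 _ hv
    intro i
    rw [if_neg]
    intro hmem
    obtain ⟨j, _, hj⟩ := Finset.mem_image.mp hmem
    exact h i j hj.symm
  linarith

lemma hull_isClosed {d k : ℕ} (f : Fin k → ↥(Avec d)) :
    IsClosed (convexHull ℝ (Set.range fun i => eVec (f i))) :=
  ((Set.finite_range _).isCompact_convexHull ℝ).isClosed

end AuxHull
section AuxCard
open Finset

lemma card_filter_val_lt (n t : ℕ) (h : t ≤ n) :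
    (Finset.univ.filter fun j : Fin n => (j:ℕ) < t).card = t := by
  rcases lt_or_eq_of_le h with h' | h'
  · have he : (Finset.univ.filter fun j : Fin n => (j:ℕ) < t) = Finset.Iio (⟨t, h'⟩ : Fin n) := by
      ext j; simp [Finset.mem_Iio, Fin.lt_def]
    rw [he, Fin.card_Iio]
  · subst h'
    have he : (Finset.univ.filter fun j : Fin t => (j:ℕ) < t) = Finset.univ := by
      ext j; simp [j.isLt]
    rw [he, Finset.card_univ, Fintype.card_fin]

end AuxCard
section AuxMain
open Finset Set

/-- A tuple of `s` elements of `A_{d+1}` summing to `(c, ε-1)`. -/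
def validF (d s : ℕ) (c : Fin (d+1) → ℤ) (ε : ℕ) (f : Fin s → ↥(Avec (d+1))) : Prop :=
  ∑ i, (f i : Fin (d + 2) → ℤ) = Fin.snoc c ((ε - 1 : ℕ) : ℤ)

/-- The closed simplex spanned by the tuple `f`. -/
def Sf {d s : ℕ} (f : Fin s → ↥(Avec (d+1))) : Set (RA (d+1)) :=
  convexHull ℝ (Set.range fun i => eVec (f i))

/-- The face of the simplex of `f` omitting the vertex `m`. -/
def Tfm {d s : ℕ} (f : Fin s → ↥(Avec (d+1))) (m : Fin s) : Set (RA (d+1)) :=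
  convexHull ℝ ((fun i => eVec (f i)) '' {i | i ≠ m})

lemma valid_strip_sum {d s ε : ℕ} {c : Fin (d+1) → ℤ} {f : Fin s → ↥(Avec (d+1))}
    (hf : validF d s c ε f) : ∑ i, ((strip (f i)) : Fin (d+1) → ℤ) = c := by
  funext j
  rw [sum_avec_apply]
  have h2 := congrFun hf (Fin.castSucc j)
  rw [sum_avec_apply, Fin.snoc_castSucc] at h2
  rw [← h2]
  exact Finset.sum_congr rfl (fun i _ => rfl)

lemma valid_chi_card {d s ε : ℕ} {c : Fin (d+1) → ℤ} {f : Fin s → ↥(Avec (d+1))}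
    (hf : validF d s c ε f) :
    (Finset.univ.filter fun i => chi (f i) = true).card = ε - 1 := by
  have h := congrFun hf (Fin.last (d+1))
  rw [sum_avec_apply, Fin.snoc_last] at h
  have h2 : ∀ i : Fin s, (f i : Fin (d+2) → ℤ) (Fin.last (d+1)) =
      if chi (f i) = true then 1 else 0 := by
    intro i; rcases last_mem (f i) with hl | hl <;> simp [chi, hl]
  rw [Finset.sum_congr rfl (fun i _ => h2 i), Finset.sum_boole] at h
  exact_mod_cast h

lemma Sf_subset_Delta {d s ε : ℕ} {c : Fin (d+1) → ℤ} {f : Fin s → ↥(Avec (d+1))}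
    (hf : validF d s c ε f) : Sf f ⊆ Delta (d+1) (Fin.snoc c ((ε - 1 : ℕ) : ℤ)) := by
  intro x hx
  simp only [Delta, Set.mem_iUnion]
  exact ⟨s, f, hf, hx⟩

lemma Delta_mem_struct {d s ε : ℕ} {c : Fin (d+1) → ℤ} (hs : c 0 = (s:ℤ))
    {x : RA (d+1)} (hx : x ∈ Delta (d+1) (Fin.snoc c ((ε - 1 : ℕ) : ℤ))) :
    ∃ f : Fin s → ↥(Avec (d+1)), validF d s c ε f ∧ x ∈ Sf f := by
  simp only [Delta, Set.mem_iUnion] at hx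
  obtain ⟨k, f, hf, hxm⟩ := hx
  have hk : k = s := by
    have h0 := sum_avec_zero f
    rw [hf] at h0
    have hb0 : (Fin.snoc c ((ε - 1 : ℕ) : ℤ) : Fin (d+2) → ℤ) 0 = c 0 := by
      have h00 : (0 : Fin (d+2)) = Fin.castSucc 0 := rfl
      rw [h00, Fin.snoc_castSucc]
    rw [hb0, hs] at h0
    exact_mod_cast h0.symm
  subst hk
  exact ⟨f, hf, hxm⟩

end AuxMain
section AuxT
open Finset Set

lemma Tfm_subset_Rset {d s ε : ℕ} {c : Fin (d+1) → ℤ} (hs3 : 3 ≤ s) (hε1 : 1 ≤ ε)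
    (hεs : ε ≤ s - 1) {f : Fin s → ↥(Avec (d+1))} (hf : validF d s c ε f)
    {m : Fin s} (hm : chi (f m) = false) :
    Tfm f m ⊆ Rset d c ε := by
  classical
  set A := Finset.univ.filter (fun i => chi (f i) = true) with hAdef
  set B := Finset.univ.filter (fun i => chi (f i) = false ∧ i ≠ m) with hBdef
  have hA : A.card = ε - 1 := valid_chi_card hf
  have hmA : m ∉ A := by simp [hAdef, hm]
  have hcards : A.card + (Finset.univ.filter (fun i => ¬ (chi (f i) = true))).card = s := by
    rw [Finset.card_filter_add_card_filter_not]; simp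
  have hBe : B = (Finset.univ.filter (fun i => ¬ (chi (f i) = true))).erase m := by
    ext i
    simp only [hBdef, Finset.mem_filter, Finset.mem_erase, Finset.mem_univ, true_and,
      Bool.not_eq_true]
    tauto
  have hmF : m ∈ Finset.univ.filter (fun i => ¬ (chi (f i) = true)) := by
    simp [hm]
  have hB : B.card = s - ε := by
    rw [hBe, Finset.card_erase_of_mem hmF]
    rw [hA] at hcards
    omega
  set g : Fin (s-1) → Fin s := fun j =>
    if h : (j : ℕ) < ε - 1 then (A.equivFin.symm ⟨(j:ℕ), by rw [hA]; exact h⟩).val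
    else (B.equivFin.symm ⟨(j:ℕ) - (ε - 1), by rw [hB]; have := j.isLt; omega⟩).val
    with hgdef
  have hgA : ∀ j : Fin (s-1), (j:ℕ) < ε - 1 → g j ∈ A := by
    intro j hj
    simp only [hgdef, dif_pos hj]
    exact (A.equivFin.symm _).2
  have hgB : ∀ j : Fin (s-1), ¬ ((j:ℕ) < ε - 1) → g j ∈ B := by
    intro j hj
    simp only [hgdef, dif_neg hj]
    exact (B.equivFin.symm _).2
  have hAB : ∀ i, i ∈ A → i ∈ B → False := by
    intro i hiA hiB
    rw [hAdef, Finset.mem_filter] at hiA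
    rw [hBdef, Finset.mem_filter] at hiB
    rw [hiA.2] at hiB
    simp at hiB
  have hginj : Function.Injective g := by
    intro j j' hjj
    by_cases hj : (j:ℕ) < ε - 1 <;> by_cases hj' : (j':ℕ) < ε - 1
    · simp only [hgdef, dif_pos hj, dif_pos hj'] at hjj
      have he := A.equivFin.symm.injective (Subtype.coe_injective hjj)
      have hval := congrArg Fin.val he
      exact Fin.ext hval
    · exact absurd hjj (fun hjj => hAB _ (hgA j hj) (hjj ▸ hgB j' hj'))
    · exact absurd hjj (fun hjj => hAB _ (hjj ▸ hgA j' hj') (hgB j hj))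
    · simp only [hgdef, dif_neg hj, dif_neg hj'] at hjj
      have he := B.equivFin.symm.injective (Subtype.coe_injective hjj)
      have hval := congrArg Fin.val he
      simp only at hval
      apply Fin.ext
      have hlt := j.isLt
      have hlt' := j'.isLt
      omega
  have hgne : ∀ j, g j ≠ m := by
    intro j
    by_cases hj : (j:ℕ) < ε - 1
    · intro he; exact hmA (he ▸ hgA j hj)
    · intro he
      have hmem := hgB j hj
      rw [he, hBdef, Finset.mem_filter] at hmem
      exact hmem.2.2 rfl
  have himg : Finset.univ.image g = Finset.univ.erase m := by
    apply Finset.eq_of_subset_of_card_le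
    · intro i hi
      obtain ⟨j, _, rfl⟩ := Finset.mem_image.mp hi
      exact Finset.mem_erase.mpr ⟨hgne j, Finset.mem_univ _⟩
    · rw [Finset.card_erase_of_mem (Finset.mem_univ m),
        Finset.card_image_of_injective _ hginj]
      simp
  have hrangeset : Set.range g = {i | i ≠ m} := by
    ext i
    constructor
    · rintro ⟨j, rfl⟩; exact hgne j
    · intro hi
      have : i ∈ Finset.univ.image g := by
        rw [himg]; exact Finset.mem_erase.mpr ⟨hi, Finset.mem_univ _⟩
      obtain ⟨j, _, hj⟩ := Finset.mem_image.mp this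
      exact ⟨j, hj⟩
  have hfg : ∀ j : Fin (s-1),
      (if (j:ℕ) < ε - 1 then app1 (strip (f (g j))) else app0 (strip (f (g j)))) = f (g j) := by
    intro j
    by_cases hj : (j:ℕ) < ε - 1
    · rw [if_pos hj]
      have hc : chi (f (g j)) = true := by
        have := hgA j hj; rw [hAdef, Finset.mem_filter] at this; exact this.2
      conv_rhs => rw [eq_app_strip (f (g j))]
      rw [hc]; simp
    · rw [if_neg hj]
      have hc : chi (f (g j)) = false := by
        have := hgB j hj; rw [hBdef, Finset.mem_filter] at this; exact this.2.1
      conv_rhs => rw [eq_app_strip (f (g j))]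
      rw [hc]; simp
  intro x hx
  have hα : ∑ i, ((strip (f i)) : Fin (d+1) → ℤ) = c := valid_strip_sum hf
  simp only [Rset, Set.mem_iUnion]
  refine ⟨s, fun i => strip (f i), hα, g, hginj, ?_⟩
  have hvr : (Set.range fun j : Fin (s-1) =>
      eVec (if (j:ℕ) < ε - 1 then app1 (strip (f (g j))) else app0 (strip (f (g j)))))
      = (fun i => eVec (f i)) '' {i | i ≠ m} := by
    have he : (fun j : Fin (s-1) =>
        eVec (if (j:ℕ) < ε - 1 then app1 (strip (f (g j))) else app0 (strip (f (g j)))))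
        = (fun i => eVec (f i)) ∘ g := by
      funext j
      show eVec _ = eVec (f (g j))
      rw [hfg j]
    rw [he, Set.range_comp, hrangeset]
  rw [hvr]
  exact hx

end AuxT
section AuxStruct
open Finset Set

lemma Rset_mem_struct {d s ε : ℕ} {c : Fin (d+1) → ℤ} (hs : c 0 = (s:ℤ)) (hε1 : 1 ≤ ε)
    (hεs : ε ≤ s) {x : RA (d+1)} (hx : x ∈ Rset d c ε) :
    ∃ f : Fin s → ↥(Avec (d+1)), validF d s c ε f ∧
      ∃ m : Fin s, chi (f m) = false ∧ x ∈ Tfm f m := by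
  classical
  simp only [Rset, Set.mem_iUnion] at hx
  obtain ⟨s', α, hα, g, hginj, hxm⟩ := hx
  have hs' : s' = s := by
    have h0 := sum_avec_zero α
    rw [hα, hs] at h0
    exact_mod_cast h0.symm
  have hs'' : s = s' := hs'.symm
  subst hs''
  have hcard : (Finset.univ.image g).card = s - 1 := by
    rw [Finset.card_image_of_injective _ hginj]; simp
  have hssub : Finset.univ.image g ⊂ Finset.univ := by
    refine Finset.ssubset_iff_subset_ne.mpr ⟨Finset.subset_univ _, ?_⟩
    intro h
    have := congrArg Finset.card h
    rw [hcard, Finset.card_univ, Fintype.card_fin] at this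
    omega
  obtain ⟨m, -, hm2⟩ := Finset.exists_of_ssubset hssub
  have hgne : ∀ j, g j ≠ m :=
    fun j he => hm2 (Finset.mem_image.mpr ⟨j, Finset.mem_univ _, he⟩)
  have himg : Finset.univ.image g = Finset.univ.erase m := by
    apply Finset.eq_of_subset_of_card_le
    · intro i hi
      obtain ⟨j, _, rfl⟩ := Finset.mem_image.mp hi
      exact Finset.mem_erase.mpr ⟨hgne j, Finset.mem_univ _⟩
    · rw [Finset.card_erase_of_mem (Finset.mem_univ m), hcard]
      simp
  have hrangeset : Set.range g = {i | i ≠ m} := by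
    ext i
    constructor
    · rintro ⟨j, rfl⟩; exact hgne j
    · intro hi
      have : i ∈ Finset.univ.image g := by
        rw [himg]; exact Finset.mem_erase.mpr ⟨hi, Finset.mem_univ _⟩
      obtain ⟨j, _, hj⟩ := Finset.mem_image.mp this
      exact ⟨j, hj⟩
  set P : Fin s → Prop := fun i => ∃ j : Fin (s-1), (j:ℕ) < ε - 1 ∧ g j = i with hPdef
  set f : Fin s → ↥(Avec (d+1)) := fun i => if P i then app1 (α i) else app0 (α i) with hfdef
  have hPm : ¬ P m := fun ⟨j, _, hj⟩ => hgne j hj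
  have hfm : chi (f m) = false := by
    simp only [hfdef, if_neg hPm]
    exact chi_app0 _
  have hfg : ∀ j : Fin (s-1),
      f (g j) = if (j:ℕ) < ε - 1 then app1 (α (g j)) else app0 (α (g j)) := by
    intro j
    by_cases hj : (j:ℕ) < ε - 1
    · rw [if_pos hj]
      simp only [hfdef]
      exact if_pos ⟨j, hj, rfl⟩
    · rw [if_neg hj]
      simp only [hfdef]
      refine if_neg ?_
      rintro ⟨j', hj', hgj⟩
      exact hj (hginj hgj ▸ hj')
  have hvalid : validF d s c ε f := by
    unfold validF
    funext jj
    induction jj using Fin.lastCases with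
    | last =>
      rw [sum_avec_apply, Fin.snoc_last]
      have h2 : ∀ i, (f i : Fin (d+2) → ℤ) (Fin.last (d+1)) = if P i then 1 else 0 := by
        intro i
        by_cases hPi : P i <;> simp [hfdef, hPi, app0, app1]
      rw [Finset.sum_congr rfl (fun i _ => h2 i), Finset.sum_boole]
      have hfilter : (Finset.univ.filter P).card = ε - 1 := by
        have himgP : Finset.univ.filter P
            = (Finset.univ.filter fun j : Fin (s-1) => (j:ℕ) < ε - 1).image g := by
          ext i
          simp only [Finset.mem_filter, Finset.mem_image, Finset.mem_univ, true_and, hPdef]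
        rw [himgP, Finset.card_image_of_injective _ hginj, card_filter_val_lt]
        omega
      rw [hfilter]
    | cast j =>
      rw [sum_avec_apply, Fin.snoc_castSucc]
      have h2 : ∀ i, (f i : Fin (d+2) → ℤ) (Fin.castSucc j) = (α i : Fin (d+1) → ℤ) j := by
        intro i
        by_cases hPi : P i <;> simp [hfdef, hPi, app0, app1]
      rw [Finset.sum_congr rfl (fun i _ => h2 i), ← sum_avec_apply, hα]
  refine ⟨f, hvalid, m, hfm, ?_⟩
  unfold Tfm
  have hvr : (Set.range fun j : Fin (s-1) =>
      eVec (if (j:ℕ) < ε - 1 then app1 (α (g j)) else app0 (α (g j))))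
      = (fun i => eVec (f i)) '' {i | i ≠ m} := by
    have he : (fun j : Fin (s-1) =>
        eVec (if (j:ℕ) < ε - 1 then app1 (α (g j)) else app0 (α (g j))))
        = (fun i => eVec (f i)) ∘ g := by
      funext j
      show _ = eVec (f (g j))
      rw [hfg j]
    rw [he, Set.range_comp, hrangeset]
  rw [← hvr]
  exact hxm

end AuxStruct
section AuxJoin
open Finset Set

lemma joined_vertices {d s ε : ℕ} {c : Fin (d+1) → ℤ} (hs3 : 3 ≤ s) (hε1 : 1 ≤ ε)
    (hε2 : ε ≤ (s + 1) / 2) {f : Fin s → ↥(Avec (d+1))} (hf : validF d s c ε f)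
    (i i' : Fin s) : JoinedIn (Rset d c ε) (eVec (f i)) (eVec (f i')) := by
  classical
  have hεs : ε ≤ s - 1 := by omega
  have hA := valid_chi_card hf
  have hsplit : (Finset.univ.filter fun j : Fin s => chi (f j) = true).card
      + (Finset.univ.filter fun j : Fin s => ¬ (chi (f j) = true)).card = s := by
    rw [Finset.card_filter_add_card_filter_not]; simp
  have hfalse : 1 < (Finset.univ.filter fun j : Fin s => chi (f j) = false).card := by
    have heq : (Finset.univ.filter fun j : Fin s => chi (f j) = false)
        = (Finset.univ.filter fun j : Fin s => ¬ (chi (f j) = true)) := by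
      ext j; simp [Bool.not_eq_true]
    rw [heq]; omega
  obtain ⟨m, hmmem, hmi⟩ := Finset.exists_mem_ne hfalse i
  obtain ⟨m', hm'mem, hm'i'⟩ := Finset.exists_mem_ne hfalse i'
  have hmchi : chi (f m) = false := (Finset.mem_filter.mp hmmem).2
  have hm'chi : chi (f m') = false := (Finset.mem_filter.mp hm'mem).2
  have hTm := Tfm_subset_Rset hs3 hε1 hεs hf hmchi
  have hTm' := Tfm_subset_Rset hs3 hε1 hεs hf hm'chi
  have hjoin : ∀ (mm : Fin s) (a b : Fin s), a ≠ mm → b ≠ mm →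
      JoinedIn (Tfm f mm) (eVec (f a)) (eVec (f b)) := by
    intro mm a b ha hb
    have hconv : Convex ℝ (Tfm f mm) := convex_convexHull _ _
    have hma : eVec (f a) ∈ Tfm f mm := subset_convexHull _ _ (Set.mem_image_of_mem _ ha)
    have hmb : eVec (f b) ∈ Tfm f mm := subset_convexHull _ _ (Set.mem_image_of_mem _ hb)
    exact (hconv.isPathConnected ⟨_, hma⟩).joinedIn _ hma _ hmb
  by_cases hmm : m = m'
  · subst hmm
    exact (hjoin m i i' (Ne.symm hmi) (Ne.symm hm'i')).mono hTm
  · have hcard2 : ({m, m'} : Finset (Fin s)).card ≤ 2 := by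
      refine le_trans (Finset.card_insert_le _ _) ?_
      simp
    have hjex : ∃ j : Fin s, j ∉ ({m, m'} : Finset (Fin s)) := by
      by_contra h
      push_neg at h
      have hsub : (Finset.univ : Finset (Fin s)) ⊆ {m, m'} := fun j _ => h j
      have := Finset.card_le_card hsub
      rw [Finset.card_univ, Fintype.card_fin] at this
      omega
    obtain ⟨j, hjm⟩ := hjex
    simp only [Finset.mem_insert, Finset.mem_singleton, not_or] at hjm
    exact ((hjoin m i j (Ne.symm hmi) hjm.1).mono hTm).trans
      ((hjoin m' j i' hjm.2 (Ne.symm hm'i')).mono hTm')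

lemma vertex_mem_Rset {d s ε : ℕ} {c : Fin (d+1) → ℤ} (hs3 : 3 ≤ s) (hε1 : 1 ≤ ε)
    (hε2 : ε ≤ (s + 1) / 2) {f : Fin s → ↥(Avec (d+1))} (hf : validF d s c ε f)
    (i : Fin s) : eVec (f i) ∈ Rset d c ε :=
  (joined_vertices hs3 hε1 hε2 hf i i).source_mem

end AuxJoin
section AuxReach
open Finset Set

/-- Two valid tuples whose simplices intersect. -/
def rrel (d s ε : ℕ) (c : Fin (d+1) → ℤ) (f f' : Fin s → ↥(Avec (d+1))) : Prop :=
  validF d s c ε f ∧ validF d s c ε f' ∧ (Sf f ∩ Sf f').Nonempty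

lemma reaches {d s ε : ℕ} {c : Fin (d+1) → ℤ} (hs3 : 3 ≤ s) (hs : c 0 = (s:ℤ))
    (hΔc : IsPathConnected (Delta (d + 1) (Fin.snoc c ((ε - 1 : ℕ) : ℤ))))
    {f₁ f₂ : Fin s → ↥(Avec (d+1))} (h1 : validF d s c ε f₁) (h2 : validF d s c ε f₂) :
    Relation.ReflTransGen (rrel d s ε c) f₁ f₂ := by
  classical
  by_contra hcon
  haveI : Finite ↥(Avec (d+1)) := avec_finite (d+1)
  set C : Set (RA (d+1)) := ⋃ (f : Fin s → ↥(Avec (d+1)))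
    (_ : validF d s c ε f ∧ Relation.ReflTransGen (rrel d s ε c) f₁ f), Sf f with hC
  set D : Set (RA (d+1)) := ⋃ (f : Fin s → ↥(Avec (d+1)))
    (_ : validF d s c ε f ∧ ¬ Relation.ReflTransGen (rrel d s ε c) f₁ f), Sf f with hD
  have hCc : IsClosed C := by
    apply isClosed_iUnion_of_finite
    intro f
    by_cases h : validF d s c ε f ∧ Relation.ReflTransGen (rrel d s ε c) f₁ f
    · rw [Set.iUnion_eq_if, if_pos h]; exact hull_isClosed f
    · simp [h]
  have hDc : IsClosed D := by
    apply isClosed_iUnion_of_finite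
    intro f
    by_cases h : validF d s c ε f ∧ ¬ Relation.ReflTransGen (rrel d s ε c) f₁ f
    · rw [Set.iUnion_eq_if, if_pos h]; exact hull_isClosed f
    · simp [h]
  have hcover : Delta (d+1) (Fin.snoc c ((ε - 1 : ℕ) : ℤ)) ⊆ C ∪ D := by
    intro x hx
    obtain ⟨f, hfv, hxf⟩ := Delta_mem_struct hs hx
    by_cases hr : Relation.ReflTransGen (rrel d s ε c) f₁ f
    · exact Or.inl (Set.mem_iUnion.mpr ⟨f, Set.mem_iUnion.mpr ⟨⟨hfv, hr⟩, hxf⟩⟩)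
    · exact Or.inr (Set.mem_iUnion.mpr ⟨f, Set.mem_iUnion.mpr ⟨⟨hfv, hr⟩, hxf⟩⟩)
  have hv1 : eVec (f₁ ⟨0, by omega⟩) ∈ Sf f₁ := vertex_mem_hull f₁ _
  have hv2 : eVec (f₂ ⟨0, by omega⟩) ∈ Sf f₂ := vertex_mem_hull f₂ _
  have hCne : (Delta (d+1) (Fin.snoc c ((ε - 1 : ℕ) : ℤ)) ∩ C).Nonempty :=
    ⟨eVec (f₁ ⟨0, by omega⟩), Sf_subset_Delta h1 hv1,
      Set.mem_iUnion.mpr ⟨f₁, Set.mem_iUnion.mpr ⟨⟨h1, Relation.ReflTransGen.refl⟩, hv1⟩⟩⟩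
  have hDne : (Delta (d+1) (Fin.snoc c ((ε - 1 : ℕ) : ℤ)) ∩ D).Nonempty :=
    ⟨eVec (f₂ ⟨0, by omega⟩), Sf_subset_Delta h2 hv2,
      Set.mem_iUnion.mpr ⟨f₂, Set.mem_iUnion.mpr ⟨⟨h2, hcon⟩, hv2⟩⟩⟩
  obtain ⟨y, -, hyC, hyD⟩ := isPreconnected_closed_iff.mp
    hΔc.isConnected.isPreconnected C D hCc hDc hcover hCne hDne
  simp only [hC, hD, Set.mem_iUnion] at hyC hyD
  obtain ⟨f, ⟨hfv, hfr⟩, hxf⟩ := hyC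
  obtain ⟨f', ⟨hf'v, hf'r⟩, hxf'⟩ := hyD
  exact hf'r (hfr.tail ⟨hfv, hf'v, ⟨y, hxf, hxf'⟩⟩)

lemma joined_of_reach {d s ε : ℕ} {c : Fin (d+1) → ℤ} (hs3 : 3 ≤ s) (hε1 : 1 ≤ ε)
    (hε2 : ε ≤ (s + 1) / 2) {f₁ f₂ : Fin s → ↥(Avec (d+1))}
    (hr : Relation.ReflTransGen (rrel d s ε c) f₁ f₂) (h1 : validF d s c ε f₁) :
    JoinedIn (Rset d c ε) (eVec (f₁ ⟨0, by omega⟩)) (eVec (f₂ ⟨0, by omega⟩)) := by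
  induction hr with
  | refl => exact JoinedIn.refl (vertex_mem_Rset hs3 hε1 hε2 h1 _)
  | tail hrest hstep ih =>
      obtain ⟨hfv, hf'v, ⟨p, hp1, hp2⟩⟩ := hstep
      unfold Sf at hp1 hp2
      obtain ⟨i, j, hij⟩ := exists_shared_vertex _ _ hp1 hp2
      refine ih.trans ?_
      have j1 := joined_vertices hs3 hε1 hε2 hfv ⟨0, by omega⟩ i
      have j2 := joined_vertices hs3 hε1 hε2 hf'v j ⟨0, by omega⟩
      rw [hij] at j1
      exact j1.trans j2

end AuxReach
/-- Lemma on `R_{c,ε}`, case a): if `deg c = s ≥ 3` and `1 ≤ ε ≤ ⌊(s+1)/2⌋`, and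
`|Δ_{(c,ε-1)}|` is nonempty and path-connected, then `|R_{c,ε}|` is nonempty and
path-connected. -/
theorem Rset_pathConnected (d : ℕ) (hd : 1 ≤ d) (c : Fin (d + 1) → ℤ) (hc : c ∈ NA d)
    (s : ℕ) (hs : c 0 = (s : ℤ)) (hs3 : 3 ≤ s) (ε : ℕ) (hε1 : 1 ≤ ε) (hε2 : ε ≤ (s + 1) / 2)
    (hΔ : (Delta (d + 1) (Fin.snoc c ((ε - 1 : ℕ) : ℤ))).Nonempty ∧
      IsPathConnected (Delta (d + 1) (Fin.snoc c ((ε - 1 : ℕ) : ℤ)))) :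
    (Rset d c ε).Nonempty ∧ IsPathConnected (Rset d c ε) := by
  obtain ⟨⟨x0, hx0⟩, hpc⟩ := hΔ
  obtain ⟨f₀, hf₀, -⟩ := Delta_mem_struct hs hx0
  have hεs : ε ≤ s := by omega
  constructor
  · exact ⟨_, vertex_mem_Rset hs3 hε1 hε2 hf₀ ⟨0, by omega⟩⟩
  · refine ⟨eVec (f₀ ⟨0, by omega⟩), vertex_mem_Rset hs3 hε1 hε2 hf₀ _, ?_⟩
    intro y hy
    obtain ⟨f, hfv, m, hfm, hyT⟩ := Rset_mem_struct hs hε1 hεs hy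
    have hεs1 : ε ≤ s - 1 := by omega
    have hT := Tfm_subset_Rset hs3 hε1 hεs1 hfv hfm
    obtain ⟨i, him⟩ : ∃ i : Fin s, i ≠ m := by
      rcases eq_or_ne m ⟨0, by omega⟩ with h | h
      · exact ⟨⟨1, by omega⟩, by rw [h]; simp [Fin.ext_iff]⟩
      · exact ⟨⟨0, by omega⟩, Ne.symm h⟩
    have hiT : eVec (f i) ∈ Tfm f m := subset_convexHull _ _ (Set.mem_image_of_mem _ him)
    have hconv : Convex ℝ (Tfm f m) := by unfold Tfm; exact convex_convexHull _ _
    have hyv : JoinedIn (Rset d c ε) y (eVec (f i)) :=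
      ((hconv.isPathConnected ⟨_, hyT⟩).joinedIn _ hyT _ hiT).mono hT
    have h2 : JoinedIn (Rset d c ε) (eVec (f i)) (eVec (f ⟨0, by omega⟩)) :=
      joined_vertices hs3 hε1 hε2 hfv _ _
    have h3 : JoinedIn (Rset d c ε) (eVec (f ⟨0, by omega⟩)) (eVec (f₀ ⟨0, by omega⟩)) :=
      joined_of_reach hs3 hε1 hε2 (reaches hs3 hs hpc hfv hf₀) hfv
    exact (h3.symm.trans (h2.symm.trans hyv.symm))
end

section
/- Let d ≥ 1, let b ∈ ℕA_d with deg b = k, let l be an integer with 0 ≤ l ≤ k−1, and let ε ∈ {0,…,k}. If k − ε ≥ l + 1, then |F^l(Δ_b)| ⊆ |Δ_{(b,ε)}|. -/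
open CategoryTheory

/-- If `deg b = k`, `0 ≤ l ≤ k - 1`, `ε ∈ {0, …, k}` and `k - ε ≥ l + 1`, then
`|F^l(Δ_b)| ⊆ |Δ_{(b,ε)}|`. -/
theorem Fset_subset_Delta (d : ℕ) (hd : 1 ≤ d) (b : Fin (d + 1) → ℤ) (hb : b ∈ NA d)
    (k : ℕ) (hk : b 0 = (k : ℤ)) (l : ℕ) (hl : l ≤ k - 1) (ε : ℕ) (hε : ε ≤ k)
    (hcone : l + 1 ≤ k - ε) :
    Fset d b l ⊆ Delta (d + 1) (Fin.snoc b (ε : ℤ)) := by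
  intro x hx
  simp only [Fset, Set.mem_iUnion] at hx
  obtain ⟨k', a, hsum, idx, hx⟩ := hx
  have hk' : k' = k := by
    have h0 : (∑ i, (a i : Fin (d + 1) → ℤ)) 0 = b 0 := by rw [hsum]
    rw [Finset.sum_apply] at h0
    have hone : ∀ i, (a i : Fin (d + 1) → ℤ) 0 = 1 := fun i => (a i).2.1
    simp only [hone, Finset.sum_const, Finset.card_univ, Fintype.card_fin, nsmul_eq_mul,
      mul_one, hk] at h0
    exact_mod_cast h0
  subst hk'
  -- the complement of the image of idx
  set S : Finset (Fin k') := (Finset.image idx Finset.univ)ᶜ with hS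
  have hScard : ε ≤ S.card := by
    have h1 : (Finset.image idx Finset.univ).card ≤ l + 1 := by
      calc (Finset.image idx Finset.univ).card ≤ Finset.univ.card :=
            Finset.card_image_le
        _ = l + 1 := by simp
    have h2 : S.card = k' - (Finset.image idx Finset.univ).card := by
      rw [hS, Finset.card_compl, Fintype.card_fin]
    omega
  obtain ⟨T, hTS, hTcard⟩ := Finset.exists_subset_card_eq hScard
  set f : Fin k' → ↥(Avec (d + 1)) :=
    fun i => if i ∈ T then app1 (a i) else app0 (a i) with hf
  simp only [Delta, Set.mem_iUnion]
  refine ⟨k', f, ?_, ?_⟩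
  · funext m
    rw [Finset.sum_apply]
    induction m using Fin.lastCases with
    | last =>
      have hlast : ∀ i, (f i : Fin (d + 2) → ℤ) (Fin.last (d + 1)) =
          if i ∈ T then 1 else 0 := by
        intro i
        by_cases h : i ∈ T <;> simp [hf, h, app0, app1, Fin.snoc_last]
      rw [Finset.sum_congr rfl (fun i _ => hlast i)]
      simp [Fin.snoc_last, hTcard]
    | cast j =>
      have hcast : ∀ i, (f i : Fin (d + 2) → ℤ) (Fin.castSucc j) =
          (a i : Fin (d + 1) → ℤ) j := by
        intro i
        by_cases h : i ∈ T <;> simp [hf, h, app0, app1, Fin.snoc_castSucc]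
      rw [Finset.sum_congr rfl (fun i _ => hcast i), ← Finset.sum_apply, hsum,
        Fin.snoc_castSucc]
  · refine convexHull_mono ?_ hx
    rintro y ⟨j, rfl⟩
    refine ⟨idx j, ?_⟩
    have hnotT : idx j ∉ T := by
      intro h
      have hmem := hTS h
      rw [hS, Finset.mem_compl] at hmem
      exact hmem (Finset.mem_image_of_mem idx (Finset.mem_univ j))
    simp [hf, hnotT]
end

section
/- (Vertex-link claim from the proof of the 1-cycle lemma.) Let d ≥ 1, let b ∈ ℕA_d with deg b = k ≥ 4, and let ε ∈ {1,…,⌊k/2⌋}. Let a ∈ A_d, and let (α,χ) ∈ A_{d+1} (so α ∈ A_d, χ ∈ {0,1}) with (α,χ) ≠ (a,1). If the closed segment joining e_{(α,χ)} and e_{(a,1)} is contained in |Δ_{(b,ε)}|, then b − a ∈ ℕA_d and e_{(α,χ)} ∈ |R_{b−a,ε}|. -/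
open CategoryTheory

lemma init_mem_Avec_s16 {d : ℕ} {v : Fin (d + 2) → ℤ} (hv : v ∈ Avec (d + 1)) :
    Fin.init v ∈ Avec d := by
  refine ⟨hv.1, fun i hi => ?_⟩
  exact hv.2 (Fin.castSucc i) (Fin.castSucc_ne_zero_iff.mpr hi)

lemma coord_eq_zero_of_convexHull {d : ℕ} {S : Set (RA d)} {c : ↥(Avec d)}
    (hS : ∀ y ∈ S, y c = 0) {x : RA d} (hx : x ∈ convexHull ℝ S) : x c = 0 := by
  have hconv : Convex ℝ {y : RA d | y c = 0} := by
    intro y hy z hz p q hp hq hpq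
    simp only [Set.mem_setOf_eq] at *
    simp [Pi.add_apply, Pi.smul_apply, hy, hz]
  exact convexHull_min hS hconv hx

lemma exists_idx_of_coord {d n : ℕ} {f : Fin n → ↥(Avec d)} {x : RA d} {c : ↥(Avec d)}
    (hx : x ∈ convexHull ℝ (Set.range fun i => eVec (f i))) (hc : x c ≠ 0) :
    ∃ i, f i = c := by
  by_contra h
  push_neg at h
  refine hc (coord_eq_zero_of_convexHull ?_ hx)
  rintro y ⟨i, rfl⟩
  simp only [eVec]
  exact if_neg fun hh => h i hh.symm

/-- Vertex-link claim from the proof of the `1`-cycle lemma: if `deg b = k ≥ 4`,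
`1 ≤ ε ≤ ⌊k/2⌋`, `v ∈ A_{d+1}` with `v ≠ (a,1)`, and the segment joining `e_v` and
`e_{(a,1)}` lies in `|Δ_{(b,ε)}|`, then `b - a ∈ ℕA_d` and `e_v ∈ |R_{b-a,ε}|`. -/
theorem vertex_link_in_Rset (d : ℕ) (hd : 1 ≤ d) (b : Fin (d + 1) → ℤ) (hb : b ∈ NA d)
    (k : ℕ) (hk : b 0 = (k : ℤ)) (hk4 : 4 ≤ k) (ε : ℕ) (hε1 : 1 ≤ ε) (hε2 : ε ≤ k / 2)
    (a : ↥(Avec d)) (v : ↥(Avec (d + 1))) (hv : v ≠ app1 a)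
    (hseg : segment ℝ (eVec v) (eVec (app1 a)) ⊆ Delta (d + 1) (Fin.snoc b (ε : ℤ))) :
    (b - ↑a) ∈ NA d ∧ eVec v ∈ Rset d (b - ↑a) ε := by
  classical
  -- the midpoint lies in Delta
  have hmid : midpoint ℝ (eVec v) (eVec (app1 a)) ∈ Delta (d + 1) (Fin.snoc b (ε : ℤ)) :=
    hseg (midpoint_mem_segment _ _)
  simp only [Delta, Set.mem_iUnion] at hmid
  obtain ⟨n, f, hsumf, hmem⟩ := hmid
  set x := midpoint ℝ (eVec v) (eVec (app1 a)) with hxdef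
  have hxv : x v ≠ 0 := by
    have : x v = (2 : ℝ)⁻¹ * (1 + 0) := by
      rw [hxdef, midpoint_eq_smul_add]
      simp only [Pi.smul_apply, Pi.add_apply, smul_eq_mul, invOf_eq_inv]
      congr 1
      simp [eVec, hv]
    rw [this]; norm_num
  have hxa : x (app1 a) ≠ 0 := by
    have : x (app1 a) = (2 : ℝ)⁻¹ * (0 + 1) := by
      rw [hxdef, midpoint_eq_smul_add]
      simp only [Pi.smul_apply, Pi.add_apply, smul_eq_mul, invOf_eq_inv]
      congr 1
      simp [eVec, hv, (Ne.symm hv : ¬ app1 a = v)]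
    rw [this]; norm_num
  obtain ⟨i1, hi1⟩ := exists_idx_of_coord hmem hxv
  obtain ⟨i0, hi0⟩ := exists_idx_of_coord hmem hxa
  have hi01 : i1 ≠ i0 := by
    intro h; apply hv; rw [← hi1, h, hi0]
  -- coordinates of the sum
  set F : Fin n → (Fin (d + 2) → ℤ) := fun i => (f i : Fin (d + 2) → ℤ) with hFdef
  have h00 : (0 : Fin (d + 2)) = Fin.castSucc 0 := rfl
  have hF0 : ∀ i, F i 0 = 1 := fun i => (f i).2.1
  have hsumF : ∑ i, F i = Fin.snoc b (ε : ℤ) := hsumf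
  -- n = k
  have hnk : n = k := by
    have h := congrFun hsumF 0
    rw [Finset.sum_apply] at h
    have hr : (Fin.snoc b (ε : ℤ) : Fin (d + 2) → ℤ) 0 = b 0 := by
      rw [h00, Fin.snoc_castSucc]
    rw [hr] at h
    simp only [hF0, Finset.sum_const, Finset.card_univ, Fintype.card_fin, nsmul_eq_mul, smul_eq_mul,
      mul_one] at h
    rw [hk] at h
    exact_mod_cast h
  obtain ⟨m, rfl⟩ : ∃ m, n = m + 1 := ⟨n - 1, by omega⟩
  have hm3 : 3 ≤ m := by omega
  -- last coordinates
  set χ : Fin (m + 1) → ℤ := fun i => F i (Fin.last (d + 1)) with hχdef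
  have hχsum : ∑ i, χ i = (ε : ℤ) := by
    have h := congrFun hsumF (Fin.last (d + 1))
    rw [Finset.sum_apply] at h
    rwa [Fin.snoc_last] at h
  have hχ01 : ∀ i, χ i = 0 ∨ χ i = 1 := fun i =>
    (f i).2.2 (Fin.last (d + 1)) (Fin.last_pos.ne')
  have hχi0 : χ i0 = 1 := by
    have : F i0 = Fin.snoc (a : Fin (d + 1) → ℤ) 1 := by rw [hFdef]; simp [hi0, app1]
    rw [hχdef]; simp [this]
  -- initial coordinates sum to b
  have hbinit : ∑ i, Fin.init (F i) = b := by
    funext j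
    have h := congrFun hsumF (Fin.castSucc j)
    rw [Finset.sum_apply] at h
    rw [Fin.snoc_castSucc] at h
    rw [Finset.sum_apply]
    exact h
  -- remove the index i0
  set α' : Fin m → ↥(Avec d) :=
    fun j => ⟨Fin.init (F (i0.succAbove j)), init_mem_Avec_s16 (f (i0.succAbove j)).2⟩ with hα'def
  have hFi0 : Fin.init (F i0) = (a : Fin (d + 1) → ℤ) := by
    rw [hFdef]; simp only [hi0]
    exact Fin.init_snoc _ _
  have hsum' : ∑ j, (α' j : Fin (d + 1) → ℤ) = b - (a : Fin (d + 1) → ℤ) := by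
    have h := Fin.sum_univ_succAbove (fun i => Fin.init (F i)) i0
    rw [hbinit, hFi0] at h
    have : ∑ j, (α' j : Fin (d + 1) → ℤ) = ∑ j, Fin.init (F (i0.succAbove j)) := rfl
    rw [this, h, add_sub_cancel_left]
  refine ⟨?_, ?_⟩
  · rw [← hsum']
    exact AddSubmonoid.sum_mem _ fun j _ => AddSubmonoid.subset_closure (α' j).2
  -- the index of v among the remaining ones
  obtain ⟨jv, hjv⟩ := Fin.exists_succAbove_eq hi01
  have hα'jv : (α' jv : Fin (d + 1) → ℤ) = Fin.init (v : Fin (d + 2) → ℤ) := by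
    rw [hα'def]; simp only [hjv, hFdef, hi1]
  have hχi1 : χ i1 = (v : Fin (d + 2) → ℤ) (Fin.last (d + 1)) := by
    simp only [hχdef, hFdef, hi1]
  -- choose the position j0 in Fin (m-1)
  have hmm : m - 1 ≤ m := Nat.sub_le m 1
  rcases hχ01 i1 with hχv | hχv
  · -- v has last coordinate 0 : put it at position ε - 1
    have hεm : ε - 1 < m - 1 := by omega
    set j0 : Fin (m - 1) := ⟨ε - 1, hεm⟩ with hj0def
    set g : Fin (m - 1) → Fin m :=
      fun j => Equiv.swap jv (Fin.castLE hmm j0) (Fin.castLE hmm j) with hgdef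
    have hginj : Function.Injective g :=
      (Equiv.swap _ _).injective.comp (Fin.castLE_injective hmm)
    simp only [Rset, Set.mem_iUnion]
    refine ⟨m, α', hsum', g, hginj, ?_⟩
    apply subset_convexHull
    refine ⟨j0, ?_⟩
    have hgj0 : g j0 = jv := by rw [hgdef]; exact Equiv.swap_apply_right _ _
    have hcond : ¬ ((j0 : ℕ) < ε - 1) := by simp [hj0def]
    show eVec (if (j0 : ℕ) < ε - 1 then app1 (α' (g j0)) else app0 (α' (g j0))) = eVec v
    rw [if_neg hcond, hgj0]
    refine congrArg eVec (Subtype.ext ?_)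
    show Fin.snoc (α' jv : Fin (d + 1) → ℤ) 0 = (v : Fin (d + 2) → ℤ)
    have hvlast : (v : Fin (d + 2) → ℤ) (Fin.last (d + 1)) = 0 := by rw [← hχi1]; exact hχv
    have hs := Fin.snoc_init_self (v : Fin (d + 2) → ℤ)
    rw [hvlast] at hs
    rw [hα'jv]
    exact hs
  · -- v has last coordinate 1 : put it at position 0; first show ε ≥ 2
    have hε2' : (2 : ℤ) ≤ (ε : ℤ) := by
      have hsub : ({i1, i0} : Finset (Fin (m + 1))) ⊆ Finset.univ := Finset.subset_univ _
      have hle : ∑ i ∈ ({i1, i0} : Finset (Fin (m + 1))), χ i ≤ ∑ i, χ i := by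
        refine Finset.sum_le_sum_of_subset_of_nonneg hsub fun i _ _ => ?_
        rcases hχ01 i with h | h <;> simp [h]
      rw [Finset.sum_pair hi01, hχv, hχi0, hχsum] at hle
      exact_mod_cast hle
    have hε2'' : 2 ≤ ε := by exact_mod_cast hε2'
    have h0m : 0 < m - 1 := by omega
    set j0 : Fin (m - 1) := ⟨0, h0m⟩ with hj0def
    set g : Fin (m - 1) → Fin m :=
      fun j => Equiv.swap jv (Fin.castLE hmm j0) (Fin.castLE hmm j) with hgdef
    have hginj : Function.Injective g :=
      (Equiv.swap _ _).injective.comp (Fin.castLE_injective hmm)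
    simp only [Rset, Set.mem_iUnion]
    refine ⟨m, α', hsum', g, hginj, ?_⟩
    apply subset_convexHull
    refine ⟨j0, ?_⟩
    have hgj0 : g j0 = jv := by rw [hgdef]; exact Equiv.swap_apply_right _ _
    have hcond : (j0 : ℕ) < ε - 1 := by simp only [hj0def]; omega
    show eVec (if (j0 : ℕ) < ε - 1 then app1 (α' (g j0)) else app0 (α' (g j0))) = eVec v
    rw [if_pos hcond, hgj0]
    refine congrArg eVec (Subtype.ext ?_)
    show Fin.snoc (α' jv : Fin (d + 1) → ℤ) 1 = (v : Fin (d + 2) → ℤ)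
    have hvlast : (v : Fin (d + 2) → ℤ) (Fin.last (d + 1)) = 1 := by rw [← hχi1]; exact hχv
    have hs := Fin.snoc_init_self (v : Fin (d + 2) → ℤ)
    rw [hvlast] at hs
    rw [hα'jv]
    exact hs
end

section
/- (Edge-link claim from the proof of the 2-cycle lemma.) Let d ≥ 1, let b ∈ ℕA_d with deg b = k ≥ 5, and let ε ∈ {1,…,⌊k/2⌋}. Let a ∈ A_d, and let (α,χ), (α',χ') ∈ A_{d+1} both different from (a,1). If conv{e_{(α,χ)}, e_{(α',χ')}, e_{(a,1)}} ⊆ |Δ_{(b,ε)}|, then b − a ∈ ℕA_d and the segment conv{e_{(α,χ)}, e_{(α',χ')}} is contained in |R_{b−a,ε}|. -/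
open CategoryTheory

section AuxEdgeLink

lemma last_ne_zero' (d : ℕ) : (Fin.last (d+1)) ≠ (0 : Fin (d+2)) := by
  simp [Fin.ext_iff]

/-- Truncation: drop the last coordinate of an element of `A_{d+1}`. -/
def truncA {d : ℕ} (u : ↥(Avec (d+1))) : ↥(Avec d) :=
  ⟨fun j => (u : Fin (d+2) → ℤ) j.castSucc, by
    constructor
    · exact u.2.1
    · intro i hi
      refine u.2.2 i.castSucc ?_
      simpa using hi⟩

lemma snoc_truncA {d : ℕ} (u : ↥(Avec (d+1))) :
    Fin.snoc (truncA u : Fin (d+1) → ℤ) ((u : Fin (d+2) → ℤ) (Fin.last (d+1)))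
      = (u : Fin (d+2) → ℤ) := by
  funext i
  induction i using Fin.lastCases with
  | last => rw [Fin.snoc_last]
  | cast j => rw [Fin.snoc_castSucc]; rfl

lemma app1_truncA {d : ℕ} (u : ↥(Avec (d+1)))
    (h : (u : Fin (d+2) → ℤ) (Fin.last (d+1)) = 1) : app1 (truncA u) = u := by
  apply Subtype.ext
  have h2 : (app1 (truncA u) : Fin (d+2) → ℤ) = Fin.snoc (truncA u : Fin (d+1) → ℤ) (1:ℤ) := rfl
  rw [h2, ← h]
  exact snoc_truncA u

lemma app0_truncA {d : ℕ} (u : ↥(Avec (d+1)))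
    (h : (u : Fin (d+2) → ℤ) (Fin.last (d+1)) = 0) : app0 (truncA u) = u := by
  apply Subtype.ext
  have h2 : (app0 (truncA u) : Fin (d+2) → ℤ) = Fin.snoc (truncA u : Fin (d+1) → ℤ) (0:ℤ) := rfl
  rw [h2, ← h]
  exact snoc_truncA u

lemma mem_range_of_coord_ne_zero {d n : ℕ} (f : Fin n → ↥(Avec d))
    {x : RA d} (hx : x ∈ convexHull ℝ (Set.range fun i => eVec (f i)))
    {u : ↥(Avec d)} (hu : x u ≠ 0) : ∃ i, f i = u := by
  by_contra hcon
  push_neg at hcon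
  apply hu
  have hsub : (Set.range fun i => eVec (f i)) ⊆ {y : RA d | y u = 0} := by
    rintro _ ⟨i, rfl⟩
    show eVec (f i) u = 0
    simp only [eVec]
    rw [if_neg]
    intro h
    exact hcon i h.symm
  have hcv : Convex ℝ {y : RA d | y u = 0} := by
    intro y hy z hz p q hp hq hpq
    simp only [Set.mem_setOf_eq] at hy hz ⊢
    simp [hy, hz]
  exact convexHull_min hsub hcv hx

lemma exists_inj_one {s : ℕ} (n1 : Fin (s-1)) (p1 : Fin s) :
    ∃ g : Fin (s-1) → Fin s, Function.Injective g ∧ g n1 = p1 := by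
  have hle : s - 1 ≤ s := Nat.sub_le s 1
  exact ⟨fun j => Equiv.swap (Fin.castLE hle n1) p1 (Fin.castLE hle j),
    (Equiv.swap _ _).injective.comp (Fin.castLE_injective hle),
    Equiv.swap_apply_left _ _⟩

lemma exists_inj_two {s : ℕ} (n1 n2 : Fin (s-1)) (p1 p2 : Fin s) (hn : n1 ≠ n2)
    (hp : p1 ≠ p2) :
    ∃ g : Fin (s-1) → Fin s, Function.Injective g ∧ g n1 = p1 ∧ g n2 = p2 := by
  have hle : s - 1 ≤ s := Nat.sub_le s 1
  set e : Fin (s-1) → Fin s := Fin.castLE hle with he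
  have heinj : Function.Injective e := Fin.castLE_injective hle
  set σ : Equiv.Perm (Fin s) := Equiv.swap (e n1) p1 with hσ
  set τ : Equiv.Perm (Fin s) := Equiv.swap (σ (e n2)) p2 with hτ
  refine ⟨fun j => τ (σ (e j)), (τ.injective.comp σ.injective).comp heinj, ?_, ?_⟩
  · show τ (σ (e n1)) = p1
    have h1 : σ (e n1) = p1 := Equiv.swap_apply_left _ _
    rw [h1, hτ]
    apply Equiv.swap_apply_of_ne_of_ne
    · intro hcon
      have h2 : σ (e n2) = σ (e n1) := by rw [h1, ← hcon]
      exact hn (heinj (σ.injective h2)).symm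
    · exact hp
  · show τ (σ (e n2)) = p2
    exact Equiv.swap_apply_left _ _

end AuxEdgeLink

/-- Edge-link claim from the proof of the `2`-cycle lemma: if `deg b = k ≥ 5`,
`1 ≤ ε ≤ ⌊k/2⌋`, `v, w ∈ A_{d+1}` are both different from `(a,1)`, and
`conv {e_v, e_w, e_{(a,1)}} ⊆ |Δ_{(b,ε)}|`, then `b - a ∈ ℕA_d` and the segment
`conv {e_v, e_w}` is contained in `|R_{b-a,ε}|`. -/
theorem edge_link_in_Rset (d : ℕ) (hd : 1 ≤ d) (b : Fin (d + 1) → ℤ) (hb : b ∈ NA d)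
    (k : ℕ) (hk : b 0 = (k : ℤ)) (hk5 : 5 ≤ k) (ε : ℕ) (hε1 : 1 ≤ ε) (hε2 : ε ≤ k / 2)
    (a : ↥(Avec d)) (v w : ↥(Avec (d + 1))) (hv : v ≠ app1 a) (hw : w ≠ app1 a)
    (htri : convexHull ℝ {eVec v, eVec w, eVec (app1 a)} ⊆
      Delta (d + 1) (Fin.snoc b (ε : ℤ))) :
    (b - ↑a) ∈ NA d ∧ segment ℝ (eVec v) (eVec w) ⊆ Rset d (b - ↑a) ε := by
  classical
  have hlast : (Fin.last (d+1)) ≠ (0 : Fin (d+2)) := last_ne_zero' d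
  have heVec_nonneg : ∀ (u z : ↥(Avec (d+1))), (0:ℝ) ≤ eVec u z := by
    intro u z
    simp only [eVec]
    split_ifs <;> norm_num
  have heVec_self : ∀ u : ↥(Avec (d+1)), eVec u u = 1 := by
    intro u; simp [eVec]
  set x : RA (d+1) :=
    (1/3:ℝ) • eVec v + (2/3:ℝ) • ((1/2:ℝ) • eVec w + (1/2:ℝ) • eVec (app1 a)) with hxdef
  have hxmem : x ∈ convexHull ℝ ({eVec v, eVec w, eVec (app1 a)} : Set (RA (d+1))) := by
    have hc := convex_convexHull ℝ ({eVec v, eVec w, eVec (app1 a)} : Set (RA (d+1)))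
    have h1 : eVec v ∈ convexHull ℝ ({eVec v, eVec w, eVec (app1 a)} : Set (RA (d+1))) :=
      subset_convexHull ℝ _ (by simp)
    have h2 : eVec w ∈ convexHull ℝ ({eVec v, eVec w, eVec (app1 a)} : Set (RA (d+1))) :=
      subset_convexHull ℝ _ (by simp)
    have h3 : eVec (app1 a) ∈ convexHull ℝ ({eVec v, eVec w, eVec (app1 a)} : Set (RA (d+1))) :=
      subset_convexHull ℝ _ (by simp)
    have hm : (1/2:ℝ) • eVec w + (1/2:ℝ) • eVec (app1 a)
        ∈ convexHull ℝ ({eVec v, eVec w, eVec (app1 a)} : Set (RA (d+1))) :=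
      hc h2 h3 (by norm_num) (by norm_num) (by norm_num)
    exact hc h1 hm (by norm_num) (by norm_num) (by norm_num)
  have hxD := htri hxmem
  simp only [Delta, Set.mem_iUnion] at hxD
  obtain ⟨k', f, hfsum, hxf⟩ := hxD
  have hxv : x v ≠ 0 := by
    have hpos : (0:ℝ) < x v := by
      rw [hxdef]
      simp only [Pi.add_apply, Pi.smul_apply, smul_eq_mul, heVec_self]
      linarith [heVec_nonneg w v, heVec_nonneg (app1 a) v]
    exact hpos.ne'
  have hxw : x w ≠ 0 := by
    have hpos : (0:ℝ) < x w := by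
      rw [hxdef]
      simp only [Pi.add_apply, Pi.smul_apply, smul_eq_mul, heVec_self]
      linarith [heVec_nonneg v w, heVec_nonneg (app1 a) w]
    exact hpos.ne'
  have hxa : x (app1 a) ≠ 0 := by
    have hpos : (0:ℝ) < x (app1 a) := by
      rw [hxdef]
      simp only [Pi.add_apply, Pi.smul_apply, smul_eq_mul, heVec_self]
      linarith [heVec_nonneg v (app1 a), heVec_nonneg w (app1 a)]
    exact hpos.ne'
  obtain ⟨i1, hi1⟩ := mem_range_of_coord_ne_zero f hxf hxv
  obtain ⟨i2, hi2⟩ := mem_range_of_coord_ne_zero f hxf hxw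
  obtain ⟨i0, hi0⟩ := mem_range_of_coord_ne_zero f hxf hxa
  -- k' = k
  have hone : ∀ i : Fin k', (f i : Fin (d+2) → ℤ) 0 = 1 := fun i => (f i).2.1
  have hk0 := congrFun hfsum (0 : Fin (d+2))
  rw [Finset.sum_apply] at hk0
  have hsnoc0 : (Fin.snoc b (ε:ℤ) : Fin (d+2) → ℤ) 0 = b 0 := by
    rw [show (0 : Fin (d+2)) = Fin.castSucc 0 from rfl, Fin.snoc_castSucc]
  rw [hsnoc0, hk] at hk0
  simp only [hone] at hk0
  rw [Finset.sum_const, Finset.card_univ, Fintype.card_fin, nsmul_eq_mul, mul_one] at hk0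
  have hk'k : k' = k := by exact_mod_cast hk0
  obtain ⟨s, rfl⟩ : ∃ s, k' = s + 1 := ⟨k' - 1, by omega⟩
  have hs4 : 4 ≤ s := by omega
  have hεs : ε ≤ s - 2 := by omega
  -- indices distinct from i0
  have hi1i0 : i1 ≠ i0 := by
    intro h
    exact hv (by rw [← hi1, h, hi0])
  have hi2i0 : i2 ≠ i0 := by
    intro h
    exact hw (by rw [← hi2, h, hi0])
  obtain ⟨p1, hp1⟩ := Fin.exists_succAbove_eq hi1i0
  obtain ⟨p2, hp2⟩ := Fin.exists_succAbove_eq hi2i0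
  set α : Fin s → ↥(Avec d) := fun j => truncA (f (i0.succAbove j)) with hαdef
  have hαsum : ∑ j, (α j : Fin (d+1) → ℤ) = b - (a : Fin (d+1) → ℤ) := by
    funext m
    have h1 := congrFun hfsum m.castSucc
    rw [Finset.sum_apply, Fin.snoc_castSucc] at h1
    rw [Fin.sum_univ_succAbove (fun i => (f i : Fin (d+2) → ℤ) m.castSucc) i0] at h1
    have h3 : (f i0 : Fin (d+2) → ℤ) m.castSucc = (a : Fin (d+1) → ℤ) m := by
      have h5 : (app1 a : Fin (d+2) → ℤ) = Fin.snoc (a : Fin (d+1) → ℤ) (1:ℤ) := rfl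
      rw [hi0, h5, Fin.snoc_castSucc]
    rw [Finset.sum_apply, Pi.sub_apply]
    have h4 : ∀ j : Fin s, (α j : Fin (d+1) → ℤ) m
        = (f (i0.succAbove j) : Fin (d+2) → ℤ) m.castSucc := fun j => rfl
    rw [Finset.sum_congr rfl (fun j _ => h4 j)]
    linarith [h1, h3]
  constructor
  · rw [← hαsum]
    exact AddSubmonoid.sum_mem _ (fun j _ => AddSubmonoid.subset_closure (α j).2)
  -- last-coordinate counting
  have hLsum := congrFun hfsum (Fin.last (d+1))
  rw [Finset.sum_apply, Fin.snoc_last] at hLsum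
  rw [Fin.sum_univ_succAbove (fun i => (f i : Fin (d+2) → ℤ) (Fin.last (d+1))) i0] at hLsum
  have hLi0 : (f i0 : Fin (d+2) → ℤ) (Fin.last (d+1)) = 1 := by
    have h5 : (app1 a : Fin (d+2) → ℤ) = Fin.snoc (a : Fin (d+1) → ℤ) (1:ℤ) := rfl
    rw [hi0, h5, Fin.snoc_last]
  have hones : ∑ j : Fin s, (f (i0.succAbove j) : Fin (d+2) → ℤ) (Fin.last (d+1))
      = (ε:ℤ) - 1 := by
    rw [hLi0] at hLsum
    linarith [hLsum]
  have hL01 : ∀ j : Fin s, (f (i0.succAbove j) : Fin (d+2) → ℤ) (Fin.last (d+1)) = 0 ∨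
      (f (i0.succAbove j) : Fin (d+2) → ℤ) (Fin.last (d+1)) = 1 :=
    fun j => (f _).2.2 _ hlast
  have hLnn : ∀ j : Fin s, (0:ℤ) ≤ (f (i0.succAbove j) : Fin (d+2) → ℤ) (Fin.last (d+1)) := by
    intro j
    rcases hL01 j with h | h <;> rw [h] <;> norm_num
  have hεlb1 : ∀ p : Fin s, (f (i0.succAbove p) : Fin (d+2) → ℤ) (Fin.last (d+1)) = 1 →
      2 ≤ ε := by
    intro p hp
    have h5 : (f (i0.succAbove p) : Fin (d+2) → ℤ) (Fin.last (d+1)) ≤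
        ∑ j : Fin s, (f (i0.succAbove j) : Fin (d+2) → ℤ) (Fin.last (d+1)) :=
      Finset.single_le_sum (fun j _ => hLnn j) (Finset.mem_univ p)
    rw [hones, hp] at h5
    omega
  have hεlb2 : ∀ p q : Fin s, p ≠ q →
      (f (i0.succAbove p) : Fin (d+2) → ℤ) (Fin.last (d+1)) = 1 →
      (f (i0.succAbove q) : Fin (d+2) → ℤ) (Fin.last (d+1)) = 1 → 3 ≤ ε := by
    intro p q hpq hpv hqv
    have h5 := Finset.sum_le_sum_of_subset_of_nonneg
      (Finset.subset_univ ({p, q} : Finset (Fin s)))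
      (fun j _ _ => hLnn j)
    rw [Finset.sum_pair hpq, hones, hpv, hqv] at h5
    omega
  -- reduction to producing positions
  have hgoal : ∀ (g : Fin (s-1) → Fin s), Function.Injective g → ∀ jv jw : Fin (s-1),
      (if (jv : ℕ) < ε - 1 then app1 (α (g jv)) else app0 (α (g jv))) = v →
      (if (jw : ℕ) < ε - 1 then app1 (α (g jw)) else app0 (α (g jw))) = w →
      segment ℝ (eVec v) (eVec w) ⊆ Rset d (b - (a : Fin (d+1) → ℤ)) ε := by
    intro g hg jv jw hjv hjw y hy
    simp only [Rset, Set.mem_iUnion]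
    refine ⟨s, α, hαsum, g, hg, ?_⟩
    refine segment_subset_convexHull ?_ ?_ hy
    · exact ⟨jv, by simp only []; rw [hjv]⟩
    · exact ⟨jw, by simp only []; rw [hjw]⟩
  have hcondA : ∀ (j : Fin (s-1)) (g : Fin (s-1) → Fin s) (p : Fin s) (u : ↥(Avec (d+1))),
      g j = p → (j:ℕ) < ε - 1 → app1 (α p) = u →
      (if (j : ℕ) < ε - 1 then app1 (α (g j)) else app0 (α (g j))) = u := by
    intro j g p u hgj hlt hu
    rw [if_pos hlt, hgj]
    exact hu
  have hcondB : ∀ (j : Fin (s-1)) (g : Fin (s-1) → Fin s) (p : Fin s) (u : ↥(Avec (d+1))),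
      g j = p → ¬ ((j:ℕ) < ε - 1) → app0 (α p) = u →
      (if (j : ℕ) < ε - 1 then app1 (α (g j)) else app0 (α (g j))) = u := by
    intro j g p u hgj hlt hu
    rw [if_neg hlt, hgj]
    exact hu
  have hLp1 : (f (i0.succAbove p1) : Fin (d+2) → ℤ) (Fin.last (d+1))
      = (v : Fin (d+2) → ℤ) (Fin.last (d+1)) := by rw [hp1, hi1]
  have hLp2 : (f (i0.succAbove p2) : Fin (d+2) → ℤ) (Fin.last (d+1))
      = (w : Fin (d+2) → ℤ) (Fin.last (d+1)) := by rw [hp2, hi2]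
  have hαp1 : α p1 = truncA v := by rw [hαdef]; simp only []; rw [hp1, hi1]
  have hαp2 : α p2 = truncA w := by rw [hαdef]; simp only []; rw [hp2, hi2]
  have hv_eq1 : (v : Fin (d+2) → ℤ) (Fin.last (d+1)) = 1 → app1 (α p1) = v := by
    intro h; rw [hαp1]; exact app1_truncA v h
  have hv_eq0 : (v : Fin (d+2) → ℤ) (Fin.last (d+1)) = 0 → app0 (α p1) = v := by
    intro h; rw [hαp1]; exact app0_truncA v h
  have hw_eq1 : (w : Fin (d+2) → ℤ) (Fin.last (d+1)) = 1 → app1 (α p2) = w := by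
    intro h; rw [hαp2]; exact app1_truncA w h
  have hw_eq0 : (w : Fin (d+2) → ℤ) (Fin.last (d+1)) = 0 → app0 (α p2) = w := by
    intro h; rw [hαp2]; exact app0_truncA w h
  have hLv := v.2.2 (Fin.last (d+1)) hlast
  have hLw := w.2.2 (Fin.last (d+1)) hlast
  rcases eq_or_ne v w with hvw | hvw
  · -- v = w : one position suffices
    subst hvw
    rcases hLv with h0 | h1
    · have hj : ε - 1 < s - 1 := by omega
      obtain ⟨g, hg, hgj⟩ := exists_inj_one (⟨ε - 1, hj⟩ : Fin (s-1)) p1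
      have hcond := hcondB ⟨ε - 1, hj⟩ g p1 v hgj
        (by show ¬ (ε - 1 < ε - 1); omega) (hv_eq0 h0)
      exact hgoal g hg _ _ hcond hcond
    · have hε2' : 2 ≤ ε := hεlb1 p1 (by rw [hLp1]; exact h1)
      have hj : 0 < s - 1 := by omega
      obtain ⟨g, hg, hgj⟩ := exists_inj_one (⟨0, hj⟩ : Fin (s-1)) p1
      have hcond := hcondA ⟨0, hj⟩ g p1 v hgj
        (by show (0:ℕ) < ε - 1; omega) (hv_eq1 h1)
      exact hgoal g hg _ _ hcond hcond
  · -- v ≠ w : two positions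
    have hi12 : i1 ≠ i2 := by
      intro h
      exact hvw (by rw [← hi1, h, hi2])
    have hp12 : p1 ≠ p2 := by
      intro h
      apply hi12
      rw [← hp1, ← hp2, h]
    rcases hLv with hv0 | hv1 <;> rcases hLw with hw0 | hw1
    · -- both 0 : positions ε-1 and ε
      have hj1 : ε - 1 < s - 1 := by omega
      have hj2 : ε < s - 1 := by omega
      have hne : (⟨ε - 1, hj1⟩ : Fin (s-1)) ≠ ⟨ε, hj2⟩ := by
        simp only [ne_eq, Fin.mk.injEq]; omega
      obtain ⟨g, hg, hg1, hg2⟩ := exists_inj_two _ _ p1 p2 hne hp12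
      exact hgoal g hg _ _
        (hcondB ⟨ε - 1, hj1⟩ g p1 v hg1 (by show ¬ (ε - 1 < ε - 1); omega) (hv_eq0 hv0))
        (hcondB ⟨ε, hj2⟩ g p2 w hg2 (by show ¬ (ε < ε - 1); omega) (hw_eq0 hw0))
    · -- v last 0, w last 1 : positions ε-1 and 0
      have hε2' : 2 ≤ ε := hεlb1 p2 (by rw [hLp2]; exact hw1)
      have hj1 : ε - 1 < s - 1 := by omega
      have hj2 : 0 < s - 1 := by omega
      have hne : (⟨ε - 1, hj1⟩ : Fin (s-1)) ≠ ⟨0, hj2⟩ := by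
        simp only [ne_eq, Fin.mk.injEq]; omega
      obtain ⟨g, hg, hg1, hg2⟩ := exists_inj_two _ _ p1 p2 hne hp12
      exact hgoal g hg _ _
        (hcondB ⟨ε - 1, hj1⟩ g p1 v hg1 (by show ¬ (ε - 1 < ε - 1); omega) (hv_eq0 hv0))
        (hcondA ⟨0, hj2⟩ g p2 w hg2 (by show (0:ℕ) < ε - 1; omega) (hw_eq1 hw1))
    · -- v last 1, w last 0 : positions 0 and ε-1
      have hε2' : 2 ≤ ε := hεlb1 p1 (by rw [hLp1]; exact hv1)
      have hj1 : 0 < s - 1 := by omega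
      have hj2 : ε - 1 < s - 1 := by omega
      have hne : (⟨0, hj1⟩ : Fin (s-1)) ≠ ⟨ε - 1, hj2⟩ := by
        simp only [ne_eq, Fin.mk.injEq]; omega
      obtain ⟨g, hg, hg1, hg2⟩ := exists_inj_two _ _ p1 p2 hne hp12
      exact hgoal g hg _ _
        (hcondA ⟨0, hj1⟩ g p1 v hg1 (by show (0:ℕ) < ε - 1; omega) (hv_eq1 hv1))
        (hcondB ⟨ε - 1, hj2⟩ g p2 w hg2 (by show ¬ (ε - 1 < ε - 1); omega) (hw_eq0 hw0))
    · -- both 1 : positions 0 and 1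
      have hε3 : 3 ≤ ε := hεlb2 p1 p2 hp12 (by rw [hLp1]; exact hv1) (by rw [hLp2]; exact hw1)
      have hj1 : 0 < s - 1 := by omega
      have hj2 : 1 < s - 1 := by omega
      have hne : (⟨0, hj1⟩ : Fin (s-1)) ≠ ⟨1, hj2⟩ := by
        simp only [ne_eq, Fin.mk.injEq]; omega
      obtain ⟨g, hg, hg1, hg2⟩ := exists_inj_two _ _ p1 p2 hne hp12
      exact hgoal g hg _ _
        (hcondA ⟨0, hj1⟩ g p1 v hg1 (by show (0:ℕ) < ε - 1; omega) (hv_eq1 hv1))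
        (hcondA ⟨1, hj2⟩ g p2 w hg2 (by show (1:ℕ) < ε - 1; omega) (hw_eq1 hw1))
end
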